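/- Let T, S be bounded operators on a complex Hilbert space H and n an even positive integer. Let R be the n×n block operator matrix on H^n with T on the main diagonal, S on the anti-diagonal, and zeros elsewhere. Then w(R) = max{w(T + S), w(T − S)}. -/

import Mathlib

noncomputable def numRadius {E : Type*} [NormedAddCommGroup E] [InnerProductSpace ℂ E]
    (T : E →L[ℂ] E) : ℝ :=
  sSup {r : ℝ | ∃ x : E, ‖x‖ = 1 ∧ r = ‖(inner ℂ (T x) x : ℂ)‖}

noncomputable def blockOp {H : Type*} [NormedAddCommGroup H] [InnerProductSpace ℂ H]
    (n : ℕ) (M : Fin n → Fin n → H →L[ℂ] H) :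
    (PiLp 2 fun _ : Fin n => H) →L[ℂ] (PiLp 2 fun _ : Fin n => H) :=
  (PiLp.continuousLinearEquiv 2 ℂ (fun _ : Fin n => H)).symm.toContinuousLinearMap ∘L
    (ContinuousLinearMap.pi fun i => ∑ j, (M i j).comp (ContinuousLinearMap.proj j)) ∘L
    (PiLp.continuousLinearEquiv 2 ℂ (fun _ : Fin n => H)).toContinuousLinearMap

section Aux

variable {E : Type*} [NormedAddCommGroup E] [InnerProductSpace ℂ E]

lemma numRadius_bddAbove (A : E →L[ℂ] E) :
    BddAbove {r : ℝ | ∃ x : E, ‖x‖ = 1 ∧ r = ‖(inner ℂ (A x) x : ℂ)‖} := by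
  refine ⟨‖A‖, ?_⟩
  rintro r ⟨x, hx, rfl⟩
  calc ‖(inner ℂ (A x) x : ℂ)‖ ≤ ‖A x‖ * ‖x‖ := norm_inner_le_norm _ _
    _ ≤ ‖A‖ * ‖x‖ * ‖x‖ :=
        mul_le_mul_of_nonneg_right (A.le_opNorm x) (norm_nonneg x)
    _ = ‖A‖ := by rw [hx]; ring

lemma numRadius_nonneg (A : E →L[ℂ] E) : 0 ≤ numRadius A :=
  Real.sSup_nonneg (by rintro r ⟨x, hx, rfl⟩; positivity)

lemma le_numRadius (A : E →L[ℂ] E) {x : E} (hx : ‖x‖ = 1) :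
    ‖(inner ℂ (A x) x : ℂ)‖ ≤ numRadius A :=
  le_csSup (numRadius_bddAbove A) ⟨x, hx, rfl⟩

lemma inner_le_numRadius (A : E →L[ℂ] E) (x : E) :
    ‖(inner ℂ (A x) x : ℂ)‖ ≤ numRadius A * (‖x‖ * ‖x‖) := by
  rcases eq_or_ne x 0 with rfl | hx
  · simp
  · have hc : (0:ℝ) < ‖x‖ := norm_pos_iff.mpr hx
    have h1 : ‖((‖x‖ : ℂ))⁻¹ • x‖ = 1 := by
      rw [norm_smul, norm_inv, Complex.norm_real, Real.norm_eq_abs,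
        abs_of_pos hc, inv_mul_cancel₀ hc.ne']
    have h2 := le_numRadius A h1
    rw [map_smul, inner_smul_left, inner_smul_right] at h2
    simp only [norm_mul, map_inv₀, Complex.conj_ofReal, norm_inv, Complex.norm_real,
      norm_norm] at h2
    calc ‖(inner ℂ (A x) x : ℂ)‖
        = (‖x‖ * ‖x‖) * (‖x‖⁻¹ * (‖x‖⁻¹ * ‖(inner ℂ (A x) x : ℂ)‖)) := by
          field_simp
      _ ≤ (‖x‖ * ‖x‖) * numRadius A := by
          have hpos : (0:ℝ) ≤ ‖x‖ * ‖x‖ := by positivity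
          exact mul_le_mul_of_nonneg_left h2 hpos
      _ = numRadius A * (‖x‖ * ‖x‖) := mul_comm _ _

end Aux

def sig (n : ℕ) (i : Fin n) : Fin n := ⟨n - 1 - (i : ℕ), by have := i.isLt; omega⟩

lemma sig_sig (n : ℕ) (i : Fin n) : sig n (sig n i) = i := by
  have := i.isLt
  ext
  simp only [sig]
  omega

section Block

variable {H : Type*} [NormedAddCommGroup H] [InnerProductSpace ℂ H]

lemma blockOp_apply (n : ℕ) (M : Fin n → Fin n → H →L[ℂ] H)
    (x : PiLp 2 fun _ : Fin n => H) (i : Fin n) :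
    blockOp n M x i = ∑ j, M i j (x j) := by
  simp [blockOp, ContinuousLinearMap.sum_apply]

lemma blockR_apply (T S : H →L[ℂ] H) {n m : ℕ} (hm : n = 2 * m)
    (x : PiLp 2 fun _ : Fin n => H) (i : Fin n) :
    blockOp n (fun i j =>
        if i = j then T else if (i : ℕ) + (j : ℕ) = n - 1 then S else 0) x i
      = T (x i) + S (x (sig n i)) := by
  rw [blockOp_apply]
  have hi := i.isLt
  have hne : ¬ i = sig n i := by
    intro h
    rw [Fin.ext_iff] at h
    simp only [sig] at h
    omega
  have key : ∀ j : Fin n,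
      (if i = j then T else if (i : ℕ) + (j : ℕ) = n - 1 then S else 0) (x j)
        = (if j = i then T (x j) else 0) + (if j = sig n i then S (x j) else 0) := by
    intro j
    have hj := j.isLt
    have hiff : j = sig n i ↔ (i : ℕ) + (j : ℕ) = n - 1 := by
      rw [Fin.ext_iff]
      show (j : ℕ) = n - 1 - (i : ℕ) ↔ _
      omega
    by_cases h1 : i = j
    · subst h1
      simp [hne]
    · have h1' : ¬ j = i := fun h => h1 h.symm
      rw [if_neg h1, if_neg h1', zero_add]
      by_cases h2 : (i : ℕ) + (j : ℕ) = n - 1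
      · rw [if_pos h2, if_pos (hiff.mpr h2)]
      · rw [if_neg h2, if_neg (fun h => h2 (hiff.mp h))]
        simp
  rw [Finset.sum_congr rfl fun j _ => key j, Finset.sum_add_distrib]
  simp [Finset.sum_ite_eq']

lemma inner_blockR (T S : H →L[ℂ] H) {n m : ℕ} (hm : n = 2 * m)
    (x : PiLp 2 fun _ : Fin n => H) :
    (inner ℂ (blockOp n (fun i j =>
        if i = j then T else if (i : ℕ) + (j : ℕ) = n - 1 then S else 0) x) x : ℂ)
      = ∑ i : Fin n, ((inner ℂ (T (x i)) (x i) : ℂ) + inner ℂ (S (x (sig n i))) (x i)) := by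
  rw [PiLp.inner_apply]
  exact Finset.sum_congr rfl fun i _ => by rw [blockR_apply T S hm, inner_add_left]

lemma sum_split {M : Type*} [AddCommMonoid M] {n m : ℕ} (hm : n = 2 * m) (f : Fin n → M) :
    ∑ i : Fin n, f i
      = ∑ i ∈ Finset.univ.filter (fun i : Fin n => (i : ℕ) < m), (f i + f (sig n i)) := by
  rw [Finset.sum_add_distrib,
    ← Finset.sum_filter_add_sum_filter_not Finset.univ (fun i : Fin n => (i : ℕ) < m) f]
  congr 1
  refine Finset.sum_nbij' (sig n) (sig n) ?_ ?_ ?_ ?_ ?_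
  · intro a ha
    simp only [Finset.mem_filter, Finset.mem_univ, true_and, not_lt] at ha ⊢
    have := a.isLt
    simp only [sig]
    omega
  · intro a ha
    simp only [Finset.mem_filter, Finset.mem_univ, true_and, not_lt] at ha ⊢
    have := a.isLt
    simp only [sig]
    omega
  · intro a _; exact sig_sig n a
  · intro a _; exact sig_sig n a
  · intro a _; rw [sig_sig]

lemma pair_identity (T S : H →L[ℂ] H) (a b : H) :
    ((inner ℂ (T a) a : ℂ) + inner ℂ (S b) a) + ((inner ℂ (T b) b : ℂ) + inner ℂ (S a) b)
      = (2 : ℂ)⁻¹ * ((inner ℂ ((T + S) (a + b)) (a + b) : ℂ)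
          + (inner ℂ ((T - S) (a - b)) (a - b) : ℂ)) := by
  simp only [ContinuousLinearMap.add_apply, ContinuousLinearMap.sub_apply, map_add, map_sub,
    inner_add_left, inner_add_right, inner_sub_left, inner_sub_right]
  ring

lemma pair_bound (T S : H →L[ℂ] H) (a b : H) :
    ‖((inner ℂ (T a) a : ℂ) + inner ℂ (S b) a) + ((inner ℂ (T b) b : ℂ) + inner ℂ (S a) b)‖
      ≤ max (numRadius (T + S)) (numRadius (T - S)) * (‖a‖ * ‖a‖ + ‖b‖ * ‖b‖) := by
  set K := max (numRadius (T + S)) (numRadius (T - S)) with hK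
  have hKnn : 0 ≤ K := le_max_of_le_left (numRadius_nonneg _)
  have h1 : ‖(inner ℂ ((T + S) (a + b)) (a + b) : ℂ)‖ ≤ K * (‖a + b‖ * ‖a + b‖) :=
    (inner_le_numRadius (T + S) (a + b)).trans
      (mul_le_mul_of_nonneg_right (le_max_left _ _) (by positivity))
  have h2 : ‖(inner ℂ ((T - S) (a - b)) (a - b) : ℂ)‖ ≤ K * (‖a - b‖ * ‖a - b‖) :=
    (inner_le_numRadius (T - S) (a - b)).trans
      (mul_le_mul_of_nonneg_right (le_max_right _ _) (by positivity))
  rw [pair_identity]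
  calc ‖(2 : ℂ)⁻¹ * ((inner ℂ ((T + S) (a + b)) (a + b) : ℂ)
          + (inner ℂ ((T - S) (a - b)) (a - b) : ℂ))‖
      = 2⁻¹ * ‖(inner ℂ ((T + S) (a + b)) (a + b) : ℂ)
          + (inner ℂ ((T - S) (a - b)) (a - b) : ℂ)‖ := by
        rw [norm_mul]; norm_num
    _ ≤ 2⁻¹ * (‖(inner ℂ ((T + S) (a + b)) (a + b) : ℂ)‖
          + ‖(inner ℂ ((T - S) (a - b)) (a - b) : ℂ)‖) := by
        have := norm_add_le (inner ℂ ((T + S) (a + b)) (a + b) : ℂ)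
          (inner ℂ ((T - S) (a - b)) (a - b) : ℂ)
        linarith
    _ ≤ 2⁻¹ * (K * (‖a + b‖ * ‖a + b‖) + K * (‖a - b‖ * ‖a - b‖)) := by linarith
    _ = 2⁻¹ * K * (‖a + b‖ * ‖a + b‖ + ‖a - b‖ * ‖a - b‖) := by ring
    _ = 2⁻¹ * K * (2 * (‖a‖ * ‖a‖ + ‖b‖ * ‖b‖)) := by
        have hpl := parallelogram_law_with_norm ℂ a b
        simp only [sq] at hpl
        rw [hpl]
    _ = K * (‖a‖ * ‖a‖ + ‖b‖ * ‖b‖) := by ring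

end Block

variable {H : Type*} [NormedAddCommGroup H] [InnerProductSpace ℂ H]
theorem stmt9 (T S : H →L[ℂ] H) (n : ℕ) (hn : 0 < n) (hne : Even n) :
    numRadius (blockOp n (fun i j =>
        if i = j then T else if (i : ℕ) + (j : ℕ) = n - 1 then S else 0)) =
      max (numRadius (T + S)) (numRadius (T - S)) := by
  obtain ⟨m, hm'⟩ := hne
  have hm : n = 2 * m := by omega
  have hm0 : 0 < m := by omega
  set R := blockOp n (fun i j : Fin n =>
    if i = j then T else if (i : ℕ) + (j : ℕ) = n - 1 then S else 0) with hR
  have hn0R : ((n : ℝ)) ≠ 0 := by positivity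
  have hn0C : ((n : ℂ)) ≠ 0 := by exact_mod_cast Nat.cast_ne_zero.mpr hn.ne'
  -- the scalar c = (sqrt n)⁻¹
  set c : ℂ := ((Real.sqrt n : ℝ) : ℂ)⁻¹ with hc_def
  have hconj : (starRingEnd ℂ) c = c := by
    rw [hc_def, map_inv₀, Complex.conj_ofReal]
  have hc2 : c * c = ((n : ℂ))⁻¹ := by
    rw [hc_def, ← mul_inv, ← Complex.ofReal_mul,
      Real.mul_self_sqrt (Nat.cast_nonneg n)]
    norm_num
  have hcnorm : ‖c‖ ^ 2 = (n : ℝ)⁻¹ := by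
    rw [hc_def, norm_inv, Complex.norm_real, Real.norm_eq_abs,
      abs_of_nonneg (Real.sqrt_nonneg _), inv_pow, Real.sq_sqrt (Nat.cast_nonneg n)]
  -- lower bounds
  have lower : ∀ (A : H →L[ℂ] H), (∀ x : H, ‖x‖ = 1 → ∃ y : PiLp 2 fun _ : Fin n => H,
      ‖y‖ = 1 ∧ (inner ℂ (R y) y : ℂ) = inner ℂ (A x) x) → numRadius A ≤ numRadius R := by
    intro A hA
    refine Real.sSup_le ?_ (numRadius_nonneg R)
    rintro r ⟨x, hx, rfl⟩
    obtain ⟨y, hy, hinner⟩ := hA x hx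
    rw [← hinner]
    exact le_numRadius R hy
  have norm_one_of : ∀ y : PiLp 2 fun _ : Fin n => H,
      (∀ i, ‖y i‖ ^ 2 = (n : ℝ)⁻¹) → ‖y‖ = 1 := by
    intro y hy
    have h2 : ‖y‖ ^ 2 = 1 := by
      rw [PiLp.norm_sq_eq_of_L2, Finset.sum_congr rfl fun i _ => hy i,
        Finset.sum_const, Finset.card_univ, Fintype.card_fin, nsmul_eq_mul,
        mul_inv_cancel₀ hn0R]
    rw [← Real.sqrt_sq (norm_nonneg y), h2, Real.sqrt_one]
  have lower_plus : numRadius (T + S) ≤ numRadius R := by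
    refine lower (T + S) ?_
    intro x hx
    refine ⟨(WithLp.toLp 2 (fun _ => c • x) : PiLp 2 fun _ : Fin n => H), ?_, ?_⟩
    · refine norm_one_of _ fun i => ?_
      show ‖c • x‖ ^ 2 = _
      rw [norm_smul, mul_pow, hx, one_pow, mul_one, hcnorm]
    · rw [hR, inner_blockR T S hm]
      have hterm : ∀ i : Fin n,
          (inner ℂ (T (c • x)) (c • x) : ℂ) + (inner ℂ (S (c • x)) (c • x) : ℂ)
            = ((n : ℂ))⁻¹ * (inner ℂ ((T + S) x) x : ℂ) := by
        intro i
        rw [map_smul, map_smul, inner_smul_left, inner_smul_left,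
          inner_smul_right, inner_smul_right, hconj]
        simp only [ContinuousLinearMap.add_apply, inner_add_left]
        rw [← hc2]; ring
      rw [Finset.sum_congr rfl fun i _ => hterm i, Finset.sum_const,
        Finset.card_univ, Fintype.card_fin, nsmul_eq_mul, ← mul_assoc,
        mul_inv_cancel₀ hn0C, one_mul]
  have lower_minus : numRadius (T - S) ≤ numRadius R := by
    refine lower (T - S) ?_
    intro x hx
    set y : PiLp 2 fun _ : Fin n => H :=
      WithLp.toLp 2 (fun i => if (i : ℕ) < m then c • x else -(c • x)) with hy_def
    have hyval : ∀ i : Fin n, y i = if (i : ℕ) < m then c • x else -(c • x) := fun i => rfl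
    have hsig_lt : ∀ i : Fin n, (i : ℕ) < m → ¬ ((sig n i : ℕ) < m) := by
      intro i h
      have := i.isLt
      simp only [sig]
      omega
    have hsig_ge : ∀ i : Fin n, ¬ ((i : ℕ) < m) → (sig n i : ℕ) < m := by
      intro i h
      have := i.isLt
      simp only [sig]
      omega
    refine ⟨y, ?_, ?_⟩
    · refine norm_one_of _ fun i => ?_
      rw [hyval]
      by_cases h : (i : ℕ) < m
      · rw [if_pos h, norm_smul, mul_pow, hx, one_pow, mul_one, hcnorm]
      · rw [if_neg h, norm_neg, norm_smul, mul_pow, hx, one_pow, mul_one, hcnorm]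
    · rw [hR, inner_blockR T S hm]
      have hterm : ∀ i : Fin n,
          (inner ℂ (T (y i)) (y i) : ℂ) + (inner ℂ (S (y (sig n i))) (y i) : ℂ)
            = ((n : ℂ))⁻¹ * (inner ℂ ((T - S) x) x : ℂ) := by
        intro i
        by_cases h : (i : ℕ) < m
        · rw [hyval, hyval, if_pos h, if_neg (hsig_lt i h)]
          simp only [map_smul, map_neg, inner_neg_left, inner_neg_right,
            inner_smul_left, inner_smul_right, hconj,
            ContinuousLinearMap.sub_apply, inner_sub_left]
          rw [← hc2]; ring
        · rw [hyval, hyval, if_neg h, if_pos (hsig_ge i h)]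
          simp only [map_smul, map_neg, inner_neg_left, inner_neg_right,
            inner_smul_left, inner_smul_right, hconj,
            ContinuousLinearMap.sub_apply, inner_sub_left]
          rw [← hc2]; ring
      rw [Finset.sum_congr rfl fun i _ => hterm i, Finset.sum_const,
        Finset.card_univ, Fintype.card_fin, nsmul_eq_mul, ← mul_assoc,
        mul_inv_cancel₀ hn0C, one_mul]
  have upper : numRadius R ≤ max (numRadius (T + S)) (numRadius (T - S)) := by
    refine Real.sSup_le ?_ (le_max_of_le_left (numRadius_nonneg _))
    rintro r ⟨x, hx, rfl⟩
    set K := max (numRadius (T + S)) (numRadius (T - S)) with hK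
    have hxsum : ∑ i : Fin n, ‖x i‖ * ‖x i‖ = 1 := by
      have h := PiLp.norm_sq_eq_of_L2 (fun _ : Fin n => H) x
      rw [hx, one_pow] at h
      rw [← h.symm]
      exact Finset.sum_congr rfl fun i _ => (sq (‖x i‖)) ▸ (pow_two (‖x i‖)).symm ▸ rfl
    rw [hR, inner_blockR T S hm,
      sum_split hm (fun i => (inner ℂ (T (x i)) (x i) : ℂ) + inner ℂ (S (x (sig n i))) (x i))]
    calc ‖∑ i ∈ Finset.univ.filter (fun i : Fin n => (i : ℕ) < m),
            (((inner ℂ (T (x i)) (x i) : ℂ) + inner ℂ (S (x (sig n i))) (x i))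
              + ((inner ℂ (T (x (sig n i))) (x (sig n i)) : ℂ)
                + inner ℂ (S (x (sig n (sig n i)))) (x (sig n i))))‖
        ≤ ∑ i ∈ Finset.univ.filter (fun i : Fin n => (i : ℕ) < m),
            ‖((inner ℂ (T (x i)) (x i) : ℂ) + inner ℂ (S (x (sig n i))) (x i))
              + ((inner ℂ (T (x (sig n i))) (x (sig n i)) : ℂ)
                + inner ℂ (S (x (sig n (sig n i)))) (x (sig n i)))‖ := norm_sum_le _ _
      _ ≤ ∑ i ∈ Finset.univ.filter (fun i : Fin n => (i : ℕ) < m),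
            K * (‖x i‖ * ‖x i‖ + ‖x (sig n i)‖ * ‖x (sig n i)‖) := by
          refine Finset.sum_le_sum fun i _ => ?_
          have h := pair_bound T S (x i) (x (sig n i))
          rw [sig_sig]
          exact h
      _ = K * ∑ i ∈ Finset.univ.filter (fun i : Fin n => (i : ℕ) < m),
            (‖x i‖ * ‖x i‖ + ‖x (sig n i)‖ * ‖x (sig n i)‖) := by
          rw [Finset.mul_sum]
      _ = K * ∑ i : Fin n, ‖x i‖ * ‖x i‖ := by
          rw [← sum_split hm (fun i => ‖x i‖ * ‖x i‖)]
      _ = K := by rw [hxsum, mul_one]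
  exact le_antisymm upper (max_le lower_plus lower_minus)
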